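/- Consider a multi-layer ScBM with population matrices P_l = ρ Y B_l Zᵀ for l = 1,…,L, and suppose Σ_{l=1}^L B_l B_lᵀ has rank K < K_y (the rank-deficient case). Let U ∈ ℝ^{n×K} be any matrix with orthonormal columns and Λ a K×K invertible diagonal matrix such that Σ_{l=1}^L P_l P_lᵀ = U Λ Uᵀ. Then: (i) for all i, j with Y_{i∗} = Y_{j∗}, one has U_{i∗} = U_{j∗}; (ii) if the rows of Δ_y^{-1} Q^R are mutually distinct and there is ζ_n > 0 with min_{1≤k≠k'≤K_y} ‖Q^R_{k∗}/√(n_k^y) − Q^R_{k'∗}/√(n_{k'}^y)‖₂ ≥ ζ_n, then for all i, j with Y_{i∗} ≠ Y_{j∗}, one has ‖U_{i∗} − U_{j∗}‖₂ ≥ ζ_n. -/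

import Mathlib

open Matrix Finset
open scoped BigOperators Classical

noncomputable section

/-- Row membership matrix associated with a cluster assignment `g`. -/
def memb {n K : ℕ} (g : Fin n → Fin K) : Matrix (Fin n) (Fin K) ℝ :=
  Matrix.of fun i k => if g i = k then 1 else 0

/-- Size of cluster `k` under assignment `g`. -/
def csize {n K : ℕ} (g : Fin n → Fin K) (k : Fin K) : ℕ :=
  (Finset.univ.filter fun i => g i = k).card

/-- Diagonal matrix Δ = diag(√n_1, …, √n_K). -/
def Dmat {n K : ℕ} (g : Fin n → Fin K) : Matrix (Fin K) (Fin K) ℝ :=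
  Matrix.diagonal fun k => Real.sqrt (csize g k)

/-- Diagonal matrix Δ⁻¹ = diag(1/√n_1, …, 1/√n_K). -/
def DmatInv {n K : ℕ} (g : Fin n → Fin K) : Matrix (Fin K) (Fin K) ℝ :=
  Matrix.diagonal fun k => (Real.sqrt (csize g k))⁻¹

/-- Euclidean distance between the `i`-th and `j`-th rows of `M`. -/
def rowDist {n K : ℕ} (M : Matrix (Fin n) (Fin K) ℝ) (i j : Fin n) : ℝ :=
  Real.sqrt (∑ m, (M i m - M j m) ^ 2)

lemma membT_mul_memb {n K : ℕ} (g : Fin n → Fin K) :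
    (memb g)ᵀ * memb g = Matrix.diagonal (fun k => (csize g k : ℝ)) := by
  ext k k'
  simp only [Matrix.mul_apply, Matrix.transpose_apply, memb, Matrix.of_apply,
    Matrix.diagonal_apply]
  by_cases h : k = k'
  · subst h
    rw [if_pos rfl, csize]
    rw [Finset.sum_congr rfl (fun i _ => show
        (if g i = k then (1:ℝ) else 0) * (if g i = k then 1 else 0)
          = if g i = k then 1 else 0 by split <;> simp)]
    simp [Finset.sum_boole]
  · rw [if_neg h]
    apply Finset.sum_eq_zero
    intro i _
    by_cases h1 : g i = k
    · by_cases h2 : g i = k'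
      · exact absurd (h1.symm.trans h2) h
      · simp [h1, h2, h]
    · simp [h1]
/-- rank-deficient case of Lemma 2.1 (row clusters). -/
theorem stmt1
    (n L Ky Kz K : ℕ) (hn : 0 < n) (hL : 0 < L)
    (ρ : ℝ) (hρ0 : 0 < ρ) (hρ1 : ρ ≤ 1)
    (gy : Fin n → Fin Ky) (gz : Fin n → Fin Kz)
    (hny : ∀ k, 0 < csize gy k) (hnz : ∀ k, 0 < csize gz k)
    (B : Fin L → Matrix (Fin Ky) (Fin Kz) ℝ)
    (hB : ∀ l a b, 0 ≤ B l a b ∧ B l a b ≤ 1)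
    (P : Fin L → Matrix (Fin n) (Fin n) ℝ)
    (hP : ∀ l, P l = ρ • (memb gy * B l * (memb gz)ᵀ))
    -- rank-deficient case: rank(∑ B_l B_lᵀ) = K < K_y
    (hrank : (∑ l, B l * (B l)ᵀ).rank = K) (hKlt : K < Ky)
    -- eigendecomposition ∑ P_l P_lᵀ = U Λ Uᵀ with U column-orthonormal, Λ invertible diagonal
    (U : Matrix (Fin n) (Fin K) ℝ) (hUorth : Uᵀ * U = 1)
    (d : Fin K → ℝ) (hd : ∀ m, d m ≠ 0)
    (hdecomp : ∑ l, P l * (P l)ᵀ = U * Matrix.diagonal d * Uᵀ)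
    -- eigendecomposition Δ_y (∑ B_l Δ_z² B_lᵀ) Δ_y = Q^R D^R (Q^R)ᵀ,
    -- Q^R column-orthonormal, D^R invertible diagonal
    (QR : Matrix (Fin Ky) (Fin K) ℝ) (hQorth : QRᵀ * QR = 1)
    (dR : Fin K → ℝ) (hdR : ∀ m, dR m ≠ 0)
    (hQdec : Dmat gy * (∑ l, B l * (Dmat gz) ^ 2 * (B l)ᵀ) * Dmat gy =
      QR * Matrix.diagonal dR * QRᵀ) :
    -- (i)
    (∀ i j : Fin n, memb gy i = memb gy j → U i = U j) ∧
    -- (ii)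
    (∀ ζ : ℝ, 0 < ζ →
      (∀ k k' : Fin Ky, k ≠ k' → (DmatInv gy * QR) k ≠ (DmatInv gy * QR) k') →
      (∀ k k' : Fin Ky, k ≠ k' →
        ζ ≤ Real.sqrt (∑ m, (QR k m / Real.sqrt (csize gy k) -
              QR k' m / Real.sqrt (csize gy k')) ^ 2)) →
      ∀ i j : Fin n, memb gy i ≠ memb gy j → ζ ≤ rowDist U i j) := by
  classical
  have hsqrt_ne : ∀ k, Real.sqrt (csize gy k) ≠ 0 := fun k =>
    Real.sqrt_ne_zero'.mpr (by exact_mod_cast hny k)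
  set W : Matrix (Fin n) (Fin Ky) ℝ := memb gy * DmatInv gy with hW
  have hDinvD : DmatInv gy * Dmat gy = 1 := by
    rw [DmatInv, Dmat, Matrix.diagonal_mul_diagonal]
    rw [show (fun k => (Real.sqrt (csize gy k))⁻¹ * Real.sqrt (csize gy k))
        = (1 : Fin Ky → ℝ) from funext fun k => inv_mul_cancel₀ (hsqrt_ne k)]
    exact Matrix.diagonal_one
  have hY : memb gy = W * Dmat gy := by
    rw [hW, Matrix.mul_assoc, hDinvD, Matrix.mul_one]
  have hDinvT : (DmatInv gy)ᵀ = DmatInv gy := by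
    rw [DmatInv, Matrix.diagonal_transpose]
  have hDT : (Dmat gy)ᵀ = Dmat gy := by
    rw [Dmat, Matrix.diagonal_transpose]
  have hWtW : Wᵀ * W = 1 := by
    rw [hW, Matrix.transpose_mul, hDinvT, Matrix.mul_assoc,
      ← Matrix.mul_assoc (memb gy)ᵀ, membT_mul_memb, DmatInv,
      Matrix.diagonal_mul_diagonal, Matrix.diagonal_mul_diagonal]
    rw [show (fun k => (Real.sqrt (csize gy k))⁻¹ *
        ((csize gy k : ℝ) * (Real.sqrt (csize gy k))⁻¹)) = (1 : Fin Ky → ℝ) from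
      funext fun k => by
        rw [← Real.mul_self_sqrt (Nat.cast_nonneg (csize gy k))]
        field_simp
        rw [Real.sqrt_sq (Real.sqrt_nonneg _)]
        exact div_self (pow_ne_zero 2 (hsqrt_ne k))]
    exact Matrix.diagonal_one
  have hDz2 : (Dmat gz) ^ 2 = Matrix.diagonal (fun k => (csize gz k : ℝ)) := by
    rw [sq, Dmat, Matrix.diagonal_mul_diagonal,
      show (fun i => Real.sqrt (csize gz i) * Real.sqrt (csize gz i))
        = (fun k => (csize gz k : ℝ)) from
      funext fun k => Real.mul_self_sqrt (Nat.cast_nonneg _)]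
  have hPl : ∀ l, P l * (P l)ᵀ
      = (ρ ^ 2) • (memb gy * (B l * (Dmat gz) ^ 2 * (B l)ᵀ) * (memb gy)ᵀ) := by
    intro l
    rw [hP l, Matrix.transpose_smul, Matrix.transpose_mul, Matrix.transpose_mul,
      Matrix.transpose_transpose, Matrix.smul_mul, Matrix.mul_smul, smul_smul, ← sq]
    congr 1
    rw [hDz2]
    rw [← membT_mul_memb gz]
    simp only [Matrix.mul_assoc]
  set V : Matrix (Fin n) (Fin K) ℝ := W * QR with hV
  have hVtV : Vᵀ * V = 1 := by
    rw [hV, Matrix.transpose_mul, Matrix.mul_assoc, ← Matrix.mul_assoc Wᵀ, hWtW,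
      Matrix.one_mul, hQorth]
  set dV : Fin K → ℝ := fun m => ρ ^ 2 * dR m with hdV
  have hM : U * Matrix.diagonal d * Uᵀ = V * Matrix.diagonal dV * Vᵀ := by
    rw [← hdecomp]
    have h1 : ∑ l, P l * (P l)ᵀ
        = (ρ ^ 2) • (memb gy * (∑ l, B l * (Dmat gz) ^ 2 * (B l)ᵀ) * (memb gy)ᵀ) := by
      rw [Finset.sum_congr rfl (fun l _ => hPl l), ← Finset.smul_sum]
      congr 1
      rw [Matrix.mul_sum, ← Matrix.sum_mul]
    rw [h1, hY, Matrix.transpose_mul, hDT]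
    have hmid : W * Dmat gy * (∑ l, B l * (Dmat gz) ^ 2 * (B l)ᵀ) * (Dmat gy * Wᵀ)
        = W * (QR * Matrix.diagonal dR * QRᵀ) * Wᵀ := by
      rw [← hQdec]
      simp only [Matrix.mul_assoc]
    rw [hmid]
    have hdVdiag : Matrix.diagonal dV = (ρ ^ 2) • Matrix.diagonal dR := by
      rw [hdV, ← Matrix.diagonal_smul]
      rfl
    have hVT : Vᵀ = QRᵀ * Wᵀ := by rw [hV, Matrix.transpose_mul W QR]
    rw [hV, hVT, hdVdiag]
    simp only [Matrix.smul_mul, Matrix.mul_smul, Matrix.mul_assoc]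
  have hproj : V * (Vᵀ * U) = U := by
    have h2 : V * Vᵀ * (V * Matrix.diagonal dV * Vᵀ) = V * Matrix.diagonal dV * Vᵀ := by
      have h0 : Vᵀ * (V * (Matrix.diagonal dV * Vᵀ)) = Matrix.diagonal dV * Vᵀ := by
        rw [← Matrix.mul_assoc, hVtV, Matrix.one_mul]
      simp only [Matrix.mul_assoc]
      rw [h0]
    rw [← hM] at h2
    have h3 := congrArg (fun X => X * (U * Matrix.diagonal (fun m => (d m)⁻¹))) h2
    simp only [Matrix.mul_assoc] at h3
    have h4 : Matrix.diagonal d * (Uᵀ * (U * Matrix.diagonal fun m => (d m)⁻¹)) = 1 := by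
      rw [← Matrix.mul_assoc Uᵀ, hUorth, Matrix.one_mul, Matrix.diagonal_mul_diagonal]
      rw [show (fun m => d m * (d m)⁻¹) = (1 : Fin K → ℝ) from
        funext fun m => mul_inv_cancel₀ (hd m)]
      exact Matrix.diagonal_one
    rw [h4, Matrix.mul_one] at h3
    exact h3
    
  set S : Matrix (Fin K) (Fin K) ℝ := Vᵀ * U with hS
  have hVS : V * S = U := hproj
  have hStS : Sᵀ * S = 1 := by
    rw [hS, Matrix.transpose_mul, Matrix.transpose_transpose, Matrix.mul_assoc, hVS, hUorth]
  have hSSt : S * Sᵀ = 1 := mul_eq_one_comm.mp hStS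
  have hVrow : ∀ i a, V i a = (Real.sqrt (csize gy (gy i)))⁻¹ * QR (gy i) a := by
    intro i a
    rw [hV, Matrix.mul_apply]
    have hWia : ∀ k, W i k = if gy i = k then (Real.sqrt (csize gy k))⁻¹ else 0 := by
      intro k
      rw [hW, DmatInv, Matrix.mul_diagonal]
      simp [memb, Matrix.of_apply, ite_mul]
    simp only [hWia, ite_mul, zero_mul]
    rw [Finset.sum_ite_eq]
    simp
  have hUrow : ∀ i m, U i m
      = ∑ a, ((Real.sqrt (csize gy (gy i)))⁻¹ * QR (gy i) a) * S a m := by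
    intro i m
    rw [← hVS, Matrix.mul_apply]
    exact Finset.sum_congr rfl fun a _ => by rw [hVrow]
  have hmemb_eq : ∀ i j : Fin n, memb gy i = memb gy j → gy i = gy j := by
    intro i j h
    have h1 : (if gy i = gy j then (1:ℝ) else 0) = 1 := by
      have := congrFun h (gy j)
      simpa [memb] using this
    by_contra hne
    rw [if_neg hne] at h1
    exact zero_ne_one h1
  constructor
  · intro i j h
    have hg := hmemb_eq i j h
    funext m
    rw [hUrow i m, hUrow j m, hg]
  · intro ζ hζ _ hsep i j hne
    have hg : gy i ≠ gy j := fun h => hne (by funext k; simp [memb, Matrix.of_apply, h])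
    set c : Fin K → ℝ := fun a => (Real.sqrt (csize gy (gy i)))⁻¹ * QR (gy i) a
      - (Real.sqrt (csize gy (gy j)))⁻¹ * QR (gy j) a with hc
    have hdiff : ∀ m, U i m - U j m = ∑ a, c a * S a m := by
      intro m
      rw [hUrow i m, hUrow j m, ← Finset.sum_sub_distrib]
      exact Finset.sum_congr rfl fun a _ => by rw [hc]; ring
    have hSorth : ∀ a b, (∑ m, S a m * S b m) = if a = b then (1:ℝ) else 0 := by
      intro a b
      have := congrFun (congrFun hSSt a) b
      simpa [Matrix.mul_apply, Matrix.transpose_apply, Matrix.one_apply] using this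
    have hsum : ∑ m, (U i m - U j m) ^ 2 = ∑ a, (c a) ^ 2 := by
      calc ∑ m, (U i m - U j m) ^ 2
          = ∑ m, (∑ a, c a * S a m) * (∑ b, c b * S b m) := by
            refine Finset.sum_congr rfl fun m _ => ?_
            rw [hdiff m, sq]
        _ = ∑ m, ∑ a, ∑ b, (c a * c b) * (S a m * S b m) := by
            refine Finset.sum_congr rfl fun m _ => ?_
            rw [Finset.sum_mul_sum]
            exact Finset.sum_congr rfl fun a _ =>
              Finset.sum_congr rfl fun b _ => by ring
        _ = ∑ a, ∑ b, (c a * c b) * ∑ m, (S a m * S b m) := by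
            rw [Finset.sum_comm]
            refine Finset.sum_congr rfl fun a _ => ?_
            rw [Finset.sum_comm]
            refine Finset.sum_congr rfl fun b _ => ?_
            rw [Finset.mul_sum]
        _ = ∑ a, (c a) ^ 2 := by
            refine Finset.sum_congr rfl fun a _ => ?_
            rw [Finset.sum_eq_single a]
            · rw [hSorth a a, if_pos rfl, mul_one, sq]
            · intro b _ hb
              rw [hSorth a b, if_neg (Ne.symm hb), mul_zero]
            · intro h; exact absurd (Finset.mem_univ a) h
    have hc2 : ∑ m, (QR (gy i) m / Real.sqrt (csize gy (gy i)) -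
        QR (gy j) m / Real.sqrt (csize gy (gy j))) ^ 2 = ∑ a, (c a) ^ 2 := by
      refine Finset.sum_congr rfl fun a _ => ?_
      rw [hc, div_eq_inv_mul, div_eq_inv_mul]
    rw [rowDist, hsum, ← hc2]
    exact hsep (gy i) (gy j) hg
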